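/- arXiv:2512.23770 — 5 statements merged into one kernel-verified Lean document; each statement's English description precedes it below -/
import Mathlib

section
/- Let g_r, g_c, δ_r, δ_c ∈ ℝ^d and ε ∈ ℝ. Assume ⟨g_c, δ_c⟩ ≤ −ε, ⟨g_r, δ_r⟩ ≥ ⟨g_r, δ_c⟩, and ⟨g_c, δ_c⟩ ≤ ⟨g_c, δ_r⟩. Then the safety-biased coefficient μ* lies in [0,1], the combination δ_{μ*} := (1−μ*)·δ_r + μ*·δ_c satisfies ⟨g_c, δ_{μ*}⟩ ≤ −ε, and for every μ ∈ [0,1] with ⟨g_c, δ_μ⟩ ≤ −ε one has ⟨g_r, δ_μ⟩ ≤ ⟨g_r, δ_{μ*}⟩; that is, μ* solves max over μ ∈ [0,1] of ⟨g_r, δ_μ⟩ subject to ⟨g_c, δ_μ⟩ ≤ −ε. -/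
open Matrix

/-- The safety-biased coefficient `μ*` from the SB-TRPO update (cf. eq. (10)):
`μ* := (⟨g_c,δ_r⟩ + ε)/(⟨g_c,δ_r⟩ − ⟨g_c,δ_c⟩)` if
`⟨g_c,δ_c⟩ ≠ ⟨g_c,δ_r⟩` and `⟨g_c,δ_r⟩ ≥ −ε`, and `μ* := 0` otherwise. -/
noncomputable def mustar {d : ℕ} (gc δr δc : Fin d → ℝ) (ε : ℝ) : ℝ :=
  if gc ⬝ᵥ δc ≠ gc ⬝ᵥ δr ∧ gc ⬝ᵥ δr ≥ -ε then
    (gc ⬝ᵥ δr + ε) / (gc ⬝ᵥ δr - gc ⬝ᵥ δc)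
  else 0

lemma dot_comb {d : ℕ} (g δr δc : Fin d → ℝ) (μ : ℝ) :
    g ⬝ᵥ ((1 - μ) • δr + μ • δc) = (1 - μ) * (g ⬝ᵥ δr) + μ * (g ⬝ᵥ δc) := by
  simp [dotProduct_add, dotProduct_smul, smul_eq_mul]

/-- Under `⟨g_c,δ_c⟩ ≤ −ε`, `⟨g_r,δ_r⟩ ≥ ⟨g_r,δ_c⟩` and
`⟨g_c,δ_c⟩ ≤ ⟨g_c,δ_r⟩`, the safety-biased coefficient `μ*` lies in `[0,1]`,
the corresponding combination satisfies the cost constraint `⟨g_c, δ_{μ*}⟩ ≤ −ε`,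
and `μ*` maximizes `μ ↦ ⟨g_r, δ_μ⟩` over `μ ∈ [0,1]` subject to
`⟨g_c, δ_μ⟩ ≤ −ε`. -/
theorem stmt5 {d : ℕ} (gr gc δr δc : Fin d → ℝ) (ε : ℝ)
    (h1 : gc ⬝ᵥ δc ≤ -ε)
    (h2 : gr ⬝ᵥ δc ≤ gr ⬝ᵥ δr)
    (h3 : gc ⬝ᵥ δc ≤ gc ⬝ᵥ δr) :
    mustar gc δr δc ε ∈ Set.Icc (0:ℝ) 1 ∧
    gc ⬝ᵥ ((1 - mustar gc δr δc ε) • δr + mustar gc δr δc ε • δc) ≤ -ε ∧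
    ∀ μ ∈ Set.Icc (0:ℝ) 1, gc ⬝ᵥ ((1 - μ) • δr + μ • δc) ≤ -ε →
      gr ⬝ᵥ ((1 - μ) • δr + μ • δc) ≤
        gr ⬝ᵥ ((1 - mustar gc δr δc ε) • δr + mustar gc δr δc ε • δc) := by
  set a := gc ⬝ᵥ δr with ha
  set b := gc ⬝ᵥ δc with hb
  set r := gr ⬝ᵥ δr with hr
  set s := gr ⬝ᵥ δc with hs
  by_cases hc : b ≠ a ∧ a ≥ -ε
  · have hab : b < a := lt_of_le_of_ne h3 hc.1
    have hpos : (0:ℝ) < a - b := by linarith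
    have hμ : mustar gc δr δc ε = (a + ε) / (a - b) := by
      rw [mustar, if_pos hc]
    set m := (a + ε) / (a - b) with hm
    have hm0 : 0 ≤ m := div_nonneg (by linarith [hc.2]) hpos.le
    have hm1 : m ≤ 1 := by
      rw [hm, div_le_one hpos]; linarith
    have hmeq : m * (a - b) = a + ε := by
      rw [hm]; field_simp
    refine ⟨⟨by rw [hμ]; exact hm0, by rw [hμ]; exact hm1⟩, ?_, ?_⟩
    · rw [hμ, dot_comb, ← ha, ← hb]; nlinarith
    · intro μ hμIcc hcon
      rw [hμ, dot_comb, dot_comb, ← hr, ← hs]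
      rw [dot_comb, ← ha, ← hb] at hcon
      have : μ ≥ m := by
        rw [hm, ge_iff_le, div_le_iff₀ hpos]; nlinarith
      nlinarith
  · have hμ : mustar gc δr δc ε = 0 := by rw [mustar, if_neg hc]
    have haε : a ≤ -ε := by
      rcases not_and_or.mp hc with h | h
      · push_neg at h; rw [← h]; exact h1
      · push_neg at h; exact h.le
    refine ⟨⟨by rw [hμ], by rw [hμ]; norm_num⟩, ?_, ?_⟩
    · rw [hμ, dot_comb, ← ha]; simpa using haε
    · intro μ hμIcc hcon
      rw [hμ, dot_comb, dot_comb, ← hr, ← hs]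
      obtain ⟨h0, _⟩ := hμIcc
      nlinarith
end

section
/- Let g_c, δ_r, δ_c ∈ ℝ^d and β ∈ (0,1]. Assume ⟨g_c, δ_c⟩ ≤ 0 and ⟨g_c, δ_c⟩ ≤ ⟨g_c, δ_r⟩, and set ε := −β·⟨g_c, δ_c⟩. Then the SB-TRPO update direction δ := (1−μ*)·δ_r + μ*·δ_c satisfies ⟨g_c, δ⟩ ≤ β·⟨g_c, δ_c⟩ ≤ 0. -/
open Matrix

/-- With `ε := −β⟨g_c,δ_c⟩` and `β ∈ (0,1]`, under
`⟨g_c,δ_c⟩ ≤ 0` and `⟨g_c,δ_c⟩ ≤ ⟨g_c,δ_r⟩`, the SB-TRPO update direction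
`δ := (1−μ*)δ_r + μ*δ_c` satisfies `⟨g_c, δ⟩ ≤ β⟨g_c,δ_c⟩ ≤ 0`. -/
theorem stmt6 {d : ℕ} (gc δr δc : Fin d → ℝ) (β : ℝ) (hβ0 : 0 < β) (hβ1 : β ≤ 1)
    (h1 : gc ⬝ᵥ δc ≤ 0) (h2 : gc ⬝ᵥ δc ≤ gc ⬝ᵥ δr) :
    gc ⬝ᵥ ((1 - mustar gc δr δc (-β * (gc ⬝ᵥ δc))) • δr
            + mustar gc δr δc (-β * (gc ⬝ᵥ δc)) • δc) ≤ β * (gc ⬝ᵥ δc) ∧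
    β * (gc ⬝ᵥ δc) ≤ 0 := by
  set a := gc ⬝ᵥ δc with ha
  set b := gc ⬝ᵥ δr with hb
  have hexp : gc ⬝ᵥ ((1 - mustar gc δr δc (-β * a)) • δr
      + mustar gc δr δc (-β * a) • δc)
      = (1 - mustar gc δr δc (-β * a)) * b + mustar gc δr δc (-β * a) * a := by
    simp [dotProduct_add, dotProduct_smul, smul_eq_mul]
    rfl
  rw [hexp]
  refine ⟨?_, mul_nonpos_of_nonneg_of_nonpos hβ0.le h1⟩
  unfold mustar
  rw [← ha, ← hb]
  by_cases h : a ≠ b ∧ b ≥ -(-β * a)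
  · rw [if_pos h]
    have hab : b - a > 0 := sub_pos.mpr (lt_of_le_of_ne h2 h.1)
    apply le_of_eq
    field_simp
    ring
  · rw [if_neg h]
    simp only [zero_mul, sub_zero, one_mul, add_zero]
    rcases not_and_or.mp h with h' | h'
    · have : a = b := not_not.mp h'
      nlinarith
    · push_neg at h'
      linarith
end

section
/- Let F be a symmetric positive definite real d×d matrix, ε_KL > 0, θ ∈ ℝ^d, and let J_r : ℝ^d → ℝ be differentiable with gradient g_r := ∇J_r(θ) ≠ 0 at θ and with ∇J_r Lipschitz on the closed ball of radius ‖δ_r‖ centred at θ, where δ_r ∈ T maximizes δ ↦ ⟨g_r, δ⟩ over T. Suppose the cost gradient g_c := ∇J_c(θ) is zero, so that the SB-TRPO direction equals δ_r. Then ⟨g_r, δ_r⟩ > 0 and there exists α ∈ (0,1] with J_r(θ + α·δ_r) > J_r(θ). -/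
open RealInnerProductSpace

/-- reward part of the Performance Improvement theorem, case
`g_c = 0`: with `F` symmetric positive definite, `ε_KL > 0`,
`g_r := ∇J_r(θ) ≠ 0`, `∇J_r` Lipschitz on the closed ball of radius `‖δ_r‖`
around `θ`, `δ_r` a maximizer of `⟨g_r,·⟩` over `T`, and `∇J_c(θ) = 0` (so
the SB-TRPO direction equals `δ_r`), we have `⟨g_r, δ_r⟩ > 0` and there
exists `α ∈ (0,1]` with `J_r(θ + αδ_r) > J_r(θ)`. -/
theorem stmt11 {d : ℕ} (F : Matrix (Fin d) (Fin d) ℝ) (hF : F.PosDef)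
    (εKL : ℝ) (hεKL : 0 < εKL) (θ : EuclideanSpace ℝ (Fin d))
    (Jr Jc : EuclideanSpace ℝ (Fin d) → ℝ) (hJr : Differentiable ℝ Jr)
    (gr : EuclideanSpace ℝ (Fin d)) (hgr : gradient Jr θ = gr) (hgr0 : gr ≠ 0)
    (δr : EuclideanSpace ℝ (Fin d)) (L : NNReal)
    (hLip : LipschitzOnWith L (gradient Jr) (Metric.closedBall θ ‖δr‖))
    (hδr : (1/2) * ⟪δr, Matrix.toEuclideanLin F δr⟫ ≤ εKL)
    (hmax : ∀ δ : EuclideanSpace ℝ (Fin d),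
      (1/2) * ⟪δ, Matrix.toEuclideanLin F δ⟫ ≤ εKL → ⟪gr, δ⟫ ≤ ⟪gr, δr⟫)
    (hgc : gradient Jc θ = 0) :
    0 < ⟪gr, δr⟫ ∧ ∃ α ∈ Set.Ioc (0:ℝ) 1, Jr θ < Jr (θ + α • δr) := by
  -- quadratic form positivity
  have hQ : ∀ x : EuclideanSpace ℝ (Fin d), x ≠ 0 → 0 < ⟪x, Matrix.toEuclideanLin F x⟫ := by
    intro x hx
    have h := hF.dotProduct_mulVec_pos (x := WithLp.equiv 2 _ x) (by simpa using hx)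
    simpa [Matrix.toEuclideanLin_apply, PiLp.inner_apply, dotProduct, mul_comm] using h
  set Q := ⟪gr, Matrix.toEuclideanLin F gr⟫ with hQdef
  have hQpos : 0 < Q := hQ gr hgr0
  set t : ℝ := Real.sqrt (2 * εKL / Q) with ht
  have htpos : 0 < t := Real.sqrt_pos.2 (by positivity)
  have hkey : 0 < ⟪gr, δr⟫ := by
    have hfeas : (1/2) * ⟪t • gr, Matrix.toEuclideanLin F (t • gr)⟫ ≤ εKL := by
      have : ⟪t • gr, Matrix.toEuclideanLin F (t • gr)⟫ = t^2 * Q := by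
        rw [map_smul, real_inner_smul_left, real_inner_smul_right, ← hQdef]; ring
      rw [this, Real.sq_sqrt (by positivity)]
      field_simp
      exact le_rfl
    have := hmax (t • gr) hfeas
    have h2 : ⟪gr, t • gr⟫ = t * ‖gr‖^2 := by
      rw [real_inner_smul_right, real_inner_self_eq_norm_sq]
    have h3 : 0 < t * ‖gr‖^2 := by
      have : 0 < ‖gr‖ := norm_pos_iff.2 hgr0
      positivity
    linarith [h2 ▸ this]
  refine ⟨hkey, ?_⟩
  -- derivative of φ α = Jr (θ + α • δr) at 0 is ⟪gr, δr⟫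
  have hline : ∀ α : ℝ, HasDerivAt (fun s : ℝ => θ + s • δr) δr α := by
    intro α
    simpa using ((hasDerivAt_id α).smul_const δr).const_add θ
  have hgrad : HasGradientAt Jr gr θ := hgr ▸ (hJr θ).hasGradientAt
  have hφ : HasDerivAt (fun s : ℝ => Jr (θ + s • δr)) ⟪gr, δr⟫ 0 := by
    have hgrad' : HasFDerivAt Jr (InnerProductSpace.toDual ℝ _ gr) (θ + (0:ℝ) • δr) := by
      rw [zero_smul, add_zero]; exact hgrad.hasFDerivAt
    have := hgrad'.comp_hasDerivAt 0 (hline 0)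
    simpa [InnerProductSpace.toDual_apply_apply, Function.comp_def] using this
  have hslope := hasDerivAt_iff_tendsto_slope.mp hφ
  have hev : ∀ᶠ α in nhdsWithin 0 (Set.Ioi 0), 0 < slope (fun s : ℝ => Jr (θ + s • δr)) 0 α := by
    have := (hslope.mono_left (nhdsWithin_mono _ (by intro x hx; exact ne_of_gt hx))).eventually
      (eventually_gt_nhds hkey)
    exact this
  have hev2 : ∀ᶠ α in nhdsWithin 0 (Set.Ioi 0), α ∈ Set.Ioc (0:ℝ) 1 := by
    filter_upwards [Ioc_mem_nhdsGT_of_mem (by norm_num : (0:ℝ) ∈ Set.Ico (0:ℝ) 1)] with α hα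
    exact hα
  obtain ⟨α, hα1, hα2⟩ := (hev.and hev2).exists
  refine ⟨α, hα2, ?_⟩
  have hαpos := hα2.1
  have hs : 0 < α⁻¹ * (Jr (θ + α • δr) - Jr θ) := by simpa [slope] using hα1
  have h := mul_pos hαpos hs
  rw [← mul_assoc, mul_inv_cancel₀ (ne_of_gt hαpos), one_mul] at h
  linarith
end

section
/- Let F be a symmetric positive definite real d×d matrix, ε_KL > 0, ε > 0, and g_r, g_c ∈ ℝ^d with g_r ≠ 0. Set a := ⟨g_r, F⁻¹g_r⟩ and b := ⟨g_c, F⁻¹g_r⟩, and suppose √(2ε_KL/a)·b ≤ −ε. Then δ* := √(2ε_KL/a)·F⁻¹g_r is feasible for the SB-TRPO quadratic program, i.e. ⟨g_c, δ*⟩ ≤ −ε and (1/2)⟨δ*, F δ*⟩ ≤ ε_KL, and it is optimal: for every δ ∈ ℝ^d with ⟨g_c, δ⟩ ≤ −ε and (1/2)⟨δ, F δ⟩ ≤ ε_KL one has ⟨g_r, δ⟩ ≤ ⟨g_r, δ*⟩. -/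
open Matrix

lemma symm_dot {d : ℕ} {F : Matrix (Fin d) (Fin d) ℝ} (hF : F.IsHermitian)
    (x y : Fin d → ℝ) : x ⬝ᵥ F.mulVec y = y ⬝ᵥ F.mulVec x := by
  rw [dotProduct_mulVec, ← mulVec_transpose, show Fᵀ = F from hF.eq, dotProduct_comm]

lemma cs {d : ℕ} {F : Matrix (Fin d) (Fin d) ℝ} (hF : F.PosDef)
    (x y : Fin d → ℝ) : (x ⬝ᵥ F.mulVec y)^2 ≤ (x ⬝ᵥ F.mulVec x) * (y ⬝ᵥ F.mulVec y) := by
  by_cases hy : y = 0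
  · simp [hy]
  · have hq : 0 < y ⬝ᵥ F.mulVec y := by have := hF.dotProduct_mulVec_pos hy; rwa [star_trivial] at this
    set t : ℝ := (x ⬝ᵥ F.mulVec y) / (y ⬝ᵥ F.mulVec y) with ht
    have h0 : 0 ≤ (x - t • y) ⬝ᵥ F.mulVec (x - t • y) := by
      have := hF.posSemidef.dotProduct_mulVec_nonneg (x - t • y); rwa [star_trivial] at this
    have hexp : (x - t • y) ⬝ᵥ F.mulVec (x - t • y)
        = x ⬝ᵥ F.mulVec x - 2 * t * (x ⬝ᵥ F.mulVec y) + t^2 * (y ⬝ᵥ F.mulVec y) := by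
      rw [mulVec_sub, mulVec_smul, sub_dotProduct, dotProduct_sub, dotProduct_sub,
        smul_dotProduct, dotProduct_smul, dotProduct_smul, symm_dot hF.1 y x]
      simp only [smul_eq_mul, smul_dotProduct, dotProduct_smul]; ring
    rw [hexp, ht] at h0
    set p := x ⬝ᵥ F.mulVec x
    set q := y ⬝ᵥ F.mulVec y
    set r := x ⬝ᵥ F.mulVec y
    have hq' : q ≠ 0 := ne_of_gt hq
    have key : (p - 2 * (r/q) * r + (r/q)^2 * q) * q = p * q - r^2 := by
      field_simp; ring
    have h2 : 0 ≤ p * q - r^2 := key ▸ mul_nonneg h0 hq.le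
    linarith

/-- case `λ = 0` of the exact SB-TRPO solution: if
`√(2ε_KL/a)·b ≤ −ε` with `a := ⟨g_r,F⁻¹g_r⟩` and `b := ⟨g_c,F⁻¹g_r⟩`, then
`δ* := √(2ε_KL/a)·F⁻¹g_r` is feasible for the SB-TRPO quadratic program and
optimal for it. -/
theorem stmt16 {d : ℕ} (F : Matrix (Fin d) (Fin d) ℝ) (hF : F.PosDef)
    (εKL ε : ℝ) (hεKL : 0 < εKL) (hε : 0 < ε)
    (gr gc : Fin d → ℝ) (hgr : gr ≠ 0)
    (hb : Real.sqrt (2 * εKL / (gr ⬝ᵥ F⁻¹.mulVec gr)) * (gc ⬝ᵥ F⁻¹.mulVec gr) ≤ -ε) :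
    (gc ⬝ᵥ (Real.sqrt (2 * εKL / (gr ⬝ᵥ F⁻¹.mulVec gr)) • F⁻¹.mulVec gr) ≤ -ε ∧
      (1/2) * ((Real.sqrt (2 * εKL / (gr ⬝ᵥ F⁻¹.mulVec gr)) • F⁻¹.mulVec gr) ⬝ᵥ
        F.mulVec (Real.sqrt (2 * εKL / (gr ⬝ᵥ F⁻¹.mulVec gr)) • F⁻¹.mulVec gr)) ≤ εKL) ∧
    ∀ δ : Fin d → ℝ, gc ⬝ᵥ δ ≤ -ε → (1/2) * (δ ⬝ᵥ F.mulVec δ) ≤ εKL →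
      gr ⬝ᵥ δ ≤ gr ⬝ᵥ (Real.sqrt (2 * εKL / (gr ⬝ᵥ F⁻¹.mulVec gr)) • F⁻¹.mulVec gr) := by
  set v := F⁻¹.mulVec gr with hv
  set a := gr ⬝ᵥ v with hadef
  set s := Real.sqrt (2 * εKL / a) with hs
  have ha : 0 < a := by
    have := hF.inv.dotProduct_mulVec_pos hgr
    simpa using this
  have hFv : F.mulVec v = gr := by
    rw [hv, mulVec_mulVec, Matrix.mul_nonsing_inv F (F.isUnit_iff_isUnit_det.mp hF.isUnit),
      one_mulVec]
  have hs0 : 0 ≤ s := Real.sqrt_nonneg _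
  have hs2 : s ^ 2 = 2 * εKL / a := Real.sq_sqrt (by positivity)
  have hvFv : v ⬝ᵥ F.mulVec v = a := by rw [hFv, dotProduct_comm]
  have hdstar : gr ⬝ᵥ (s • v) = s * a := by rw [dotProduct_smul, smul_eq_mul, hadef]
  refine ⟨⟨?_, ?_⟩, ?_⟩
  · rw [dotProduct_smul, smul_eq_mul]; exact hb
  · rw [mulVec_smul, dotProduct_smul, smul_dotProduct, smul_eq_mul, smul_eq_mul, hvFv]
    have key : s * s * a = 2 * εKL := by
      have h : s * s = 2 * εKL / a := by rw [← sq]; exact hs2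
      rw [h, div_mul_cancel₀ _ (ne_of_gt ha)]
    nlinarith [key]
  · intro δ _ hKL
    rw [hdstar]
    have hsym : gr ⬝ᵥ δ = v ⬝ᵥ F.mulVec δ := by
      rw [← hFv, symm_dot hF.1 v δ, hFv, dotProduct_comm, ← hFv, symm_dot hF.1]
    have hcs : (v ⬝ᵥ F.mulVec δ)^2 ≤ a * (δ ⬝ᵥ F.mulVec δ) := by
      have := cs hF v δ
      rwa [hvFv] at this
    have hsq : (gr ⬝ᵥ δ)^2 ≤ (s * a)^2 := by
      have h1 : (s * a)^2 = 2 * εKL * a := by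
        rw [mul_pow, hs2]; field_simp
      have h2 : δ ⬝ᵥ F.mulVec δ ≤ 2 * εKL := by linarith
      rw [hsym, h1]
      calc (v ⬝ᵥ F.mulVec δ)^2 ≤ a * (δ ⬝ᵥ F.mulVec δ) := hcs
        _ ≤ a * (2 * εKL) := by exact mul_le_mul_of_nonneg_left h2 ha.le
        _ = 2 * εKL * a := by ring
    have hsa : 0 ≤ s * a := mul_nonneg hs0 ha.le
    nlinarith [sq_nonneg (gr ⬝ᵥ δ + s * a)]
end

section
/- Let Π be a set, J_r, J_c : Π → ℝ, D : Π → Π → ℝ with D(π,π) = 0 for all π, ε_KL ≥ 0, and β ∈ (0,1]. Let (π_k) be a sequence in Π such that for every k there is a real number c*_k with: (i) c*_k = J_c(σ) for some σ with D(π_k, σ) ≤ ε_KL, and c*_k ≤ J_c(π) for every π with D(π_k, π) ≤ ε_KL; and, setting ε_k := β·(J_c(π_k) − c*_k), (ii) D(π_k, π_{k+1}) ≤ ε_KL, J_c(π_{k+1}) ≤ J_c(π_k) − ε_k, and J_r(π) ≤ J_r(π_{k+1}) for every π with D(π_k, π) ≤ ε_KL and J_c(π) ≤ J_c(π_k) −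 ε_k. Suppose for some index K both J_c(π_{K+1}) = J_c(π_K) and J_r(π_{K+1}) = J_r(π_K). Then π_K is a trust-region local optimum of both cost and the modified constrained problem: J_c(π_K) = c*_K, i.e. J_c(π_K) ≤ J_c(π) for every π with D(π_K, π) ≤ ε_KL; and J_r(π_K) ≥ J_r(π) for every π with D(π_K, π) ≤ ε_KL and J_c(π) ≤ c*_K. -/
/-- Lemma on the idealised SB-TRPO update, part 3: under the
same setup as Statement 18, if for some index `K` neither cost nor reward
changes (`J_c(π_{K+1}) = J_c(π_K)` and `J_r(π_{K+1}) = J_r(π_K)`), then `π_K`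
is a trust-region local optimum of both cost and the modified constrained
problem: `J_c(π_K) = c*_K`, i.e. `J_c(π_K) ≤ J_c(π)` for all `π` in the trust
region around `π_K`; and `J_r(π_K) ≥ J_r(π)` for all `π` in the trust region
around `π_K` with `J_c(π) ≤ c*_K`. -/
theorem stmt19 {P : Type*} (Jr Jc : P → ℝ) (D : P → P → ℝ)
    (hD : ∀ π : P, D π π = 0) (εKL : ℝ) (hεKL : 0 ≤ εKL)
    (β : ℝ) (hβ0 : 0 < β) (hβ1 : β ≤ 1)
    (pi : ℕ → P) (cstar : ℕ → ℝ)
    (hattain : ∀ k : ℕ, ∃ σ : P, D (pi k) σ ≤ εKL ∧ cstar k = Jc σ)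
    (hlb : ∀ k : ℕ, ∀ π : P, D (pi k) π ≤ εKL → cstar k ≤ Jc π)
    (htr : ∀ k : ℕ, D (pi k) (pi (k + 1)) ≤ εKL)
    (hcost : ∀ k : ℕ, Jc (pi (k + 1)) ≤ Jc (pi k) - β * (Jc (pi k) - cstar k))
    (hmax : ∀ k : ℕ, ∀ π : P, D (pi k) π ≤ εKL →
      Jc π ≤ Jc (pi k) - β * (Jc (pi k) - cstar k) → Jr π ≤ Jr (pi (k + 1)))
    (K : ℕ)
    (hcK : Jc (pi (K + 1)) = Jc (pi K))
    (hrK : Jr (pi (K + 1)) = Jr (pi K)) :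
    Jc (pi K) = cstar K ∧
    (∀ π : P, D (pi K) π ≤ εKL → Jc (pi K) ≤ Jc π) ∧
    (∀ π : P, D (pi K) π ≤ εKL → Jc π ≤ cstar K → Jr π ≤ Jr (pi K)) := by
  have hself : D (pi K) (pi K) ≤ εKL := by rw [hD]; exact hεKL
  have h1 : cstar K ≤ Jc (pi K) := hlb K (pi K) hself
  have h2 : Jc (pi K) ≤ cstar K := by
    have := hcost K
    rw [hcK] at this
    nlinarith
  have heq : Jc (pi K) = cstar K := le_antisymm h2 h1
  refine ⟨heq, fun π hπ => heq ▸ hlb K π hπ, fun π hπ hc => ?_⟩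
  have : Jr π ≤ Jr (pi (K + 1)) := hmax K π hπ (by nlinarith)
  linarith [hrK ▸ this]
end
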